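/- Let A be an irreducible N×N matrix over ℝ ∪ {+∞} whose graph contains at least one circuit, λ its minimum average circuit weight, Â the normalised matrix Â_{ij} = A_{ij} − λ, Â* = ⊖_{k=0}^{N−1} Â^{⊙k} its Kleene star, and let V^cr be the (nonempty) set of nodes lying on circuits of G(A) of average weight λ. Then for every finite vector v ∈ ℝ^N with min_j (A_{ij} + v_j) = λ + v_i for all i, there exist coefficients a_i ∈ ℝ for i ∈ V^cr such that v_k = min_{i ∈ V^cr} (a_i + (Â*)_{ki}) for all k; that is, every min-plus eigenvector of A is a tropical linear combination of the critical columns of Â*. -/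

import Mathlib

open scoped BigOperators

/-- Min-plus product of matrices over ℝ ∪ {+∞}: `(A ⊙ B) i j = min_k (A i k + B k j)`. -/
def mpMul {N : ℕ} (A B : Matrix (Fin N) (Fin N) (WithTop ℝ)) :
    Matrix (Fin N) (Fin N) (WithTop ℝ) :=
  fun i j => Finset.univ.inf fun k => A i k + B k j

/-- The min-plus identity matrix: `0` on the diagonal, `+∞` elsewhere. -/
def mpId {N : ℕ} : Matrix (Fin N) (Fin N) (WithTop ℝ) :=
  fun i j => if i = j then 0 else ⊤

/-- Min-plus matrix powers. -/
def mpPow {N : ℕ} (A : Matrix (Fin N) (Fin N) (WithTop ℝ)) : ℕ → Matrix (Fin N) (Fin N) (WithTop ℝ)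
  | 0 => mpId
  | k + 1 => mpMul A (mpPow A k)

lemma wt_add_inf {α : Type*} (s : Finset α) (f : α → WithTop ℝ) (c : WithTop ℝ) :
    c + s.inf f = s.inf fun x => c + f x := by
  induction s using Finset.cons_induction with
  | empty => simp
  | cons a s ha ih =>
    simp only [Finset.inf_cons, ← ih]
    exact (min_add_add_left c _ _).symm

lemma coe_of_add (a : WithTop ℝ) (b c : ℝ) (h : a + (b : WithTop ℝ) = ((c:ℝ):WithTop ℝ)) :
    a = ((c - b : ℝ) : WithTop ℝ) := by
  lift a to ℝ using (by rintro rfl; simp at h)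
  rw [← WithTop.coe_add, WithTop.coe_inj] at h
  rw [WithTop.coe_inj]; linarith

lemma tel (w : ℕ → ℝ) (r : ℝ) (s t : ℕ) (h : s ≤ t) :
    ∑ u : Fin s, (r + w (t - 1 - u.val) - w (t - u.val)) = s * r + w (t - s) - w t := by
  rw [Fin.sum_univ_eq_sum_range (fun u => r + w (t - 1 - u) - w (t - u))]
  have h1 : ∀ u ∈ Finset.range s,
      (r + w (t - 1 - u) - w (t - u)) =
        (fun x => r + (w (t - s + x) - w (t - s + x + 1))) (s - 1 - u) := by
    intro u hu
    simp only [Finset.mem_range] at hu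
    show r + w (t - 1 - u) - w (t - u) =
      r + (w (t - s + (s - 1 - u)) - w (t - s + (s - 1 - u) + 1))
    have e1 : t - s + (s - 1 - u) = t - 1 - u := by omega
    have e2 : t - s + (s - 1 - u) + 1 = t - u := by omega
    rw [e2, e1]; ring
  rw [Finset.sum_congr rfl h1,
    Finset.sum_range_reflect (fun x => r + (w (t - s + x) - w (t - s + x + 1))) s,
    Finset.sum_add_distrib, Finset.sum_const, Finset.card_range]
  have h4 := Finset.sum_range_sub' (fun y => w (t - s + y)) s
  simp only [← Nat.add_assoc, Nat.add_zero] at h4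
  rw [h4]
  have h3 : t - s + s = t := by omega
  rw [h3, nsmul_eq_mul]
  ring

lemma pow_le_walk {N : ℕ} (B : Matrix (Fin N) (Fin N) (WithTop ℝ)) :
    ∀ (l : ℕ) (c : Fin (l + 1) → Fin N),
      mpPow B l (c (Fin.last l)) (c 0) ≤ ∑ t : Fin l, B (c t.succ) (c t.castSucc) := by
  intro l
  induction l with
  | zero =>
    intro c
    have : c (Fin.last 0) = c 0 := rfl
    simp [mpPow, mpId, this]
  | succ l ih =>
    intro c
    set c' : Fin (l + 1) → Fin N := fun t => c t.castSucc with hc'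
    rw [Fin.sum_univ_castSucc]
    have key : mpPow B (l + 1) (c (Fin.last (l + 1))) (c 0) ≤
        B (c (Fin.last (l + 1))) (c' (Fin.last l)) + mpPow B l (c' (Fin.last l)) (c' 0) := by
      show mpMul B (mpPow B l) _ _ ≤ _
      exact Finset.inf_le (Finset.mem_univ _)
    refine key.trans ?_
    have hsum : ∑ t : Fin l, B (c t.castSucc.succ) (c t.castSucc.castSucc) =
        ∑ t : Fin l, B (c' t.succ) (c' t.castSucc) := by
      refine Finset.sum_congr rfl fun t _ => ?_
      rw [hc']
      exact rfl
    rw [hsum]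
    have hlast : B (c (Fin.last l).succ) (c (Fin.last l).castSucc) =
        B (c (Fin.last (l+1))) (c' (Fin.last l)) := by
      rw [hc', Fin.succ_last]
    rw [hlast]
    calc B (c (Fin.last (l+1))) (c' (Fin.last l)) + mpPow B l (c' (Fin.last l)) (c' 0)
        = mpPow B l (c' (Fin.last l)) (c' 0) + B (c (Fin.last (l+1))) (c' (Fin.last l)) :=
          add_comm _ _
      _ ≤ _ := add_le_add_left (ih c') _

lemma lower {N : ℕ} (B : Matrix (Fin N) (Fin N) (WithTop ℝ)) (v : Fin N → ℝ)
    (hE : ∀ k m : Fin N, ((v k : ℝ) : WithTop ℝ) ≤ B k m + (v m : WithTop ℝ)) :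
    ∀ (l : ℕ) (k i : Fin N), ((v k : ℝ) : WithTop ℝ) ≤ mpPow B l k i + (v i : WithTop ℝ) := by
  intro l
  induction l with
  | zero =>
    intro k i
    by_cases h : k = i
    · subst h; simp [mpPow, mpId]
    · simp [mpPow, mpId, h]
  | succ l ih =>
    intro k i
    show _ ≤ mpMul B (mpPow B l) k i + _
    unfold mpMul
    rw [add_comm, wt_add_inf]
    refine Finset.le_inf fun m _ => ?_
    calc ((v k : ℝ) : WithTop ℝ) ≤ B k m + (v m : WithTop ℝ) := hE k m
      _ ≤ B k m + (mpPow B l m i + (v i : WithTop ℝ)) := add_le_add_right (ih m i) _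
      _ = (v i : WithTop ℝ) + (B k m + mpPow B l m i) := by abel

/-- `IsWalk A l v j i` : `v` is a walk of length `l` from node `j` to node `i` in the
weighted digraph `G(A)`, where there is an edge from `b` to `a` whenever `A a b ≠ +∞`. -/
def IsWalk {N : ℕ} (A : Matrix (Fin N) (Fin N) (WithTop ℝ)) (l : ℕ)
    (v : Fin (l + 1) → Fin N) (j i : Fin N) : Prop :=
  v 0 = j ∧ v (Fin.last l) = i ∧ ∀ t : Fin l, A (v t.succ) (v t.castSucc) ≠ ⊤

/-- The weight of a walk: the sum of the weights of its edges. -/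
def walkWeight {N : ℕ} (A : Matrix (Fin N) (Fin N) (WithTop ℝ)) (l : ℕ)
    (v : Fin (l + 1) → Fin N) : WithTop ℝ :=
  ∑ t : Fin l, A (v t.succ) (v t.castSucc)

def normalised {N : ℕ} (A : Matrix (Fin N) (Fin N) (WithTop ℝ)) (lam : ℝ) :
    Matrix (Fin N) (Fin N) (WithTop ℝ) :=
  fun i j => A i j + ((-lam : ℝ) : WithTop ℝ)

def kleeneStar {N : ℕ} (B : Matrix (Fin N) (Fin N) (WithTop ℝ)) :
    Matrix (Fin N) (Fin N) (WithTop ℝ) :=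
  fun i j => (Finset.range N).inf fun k => mpPow B k i j

/-- A node is critical if it lies on a circuit of average weight `lam`. -/
def IsCriticalNode {N : ℕ} (A : Matrix (Fin N) (Fin N) (WithTop ℝ)) (lam : ℝ)
    (i : Fin N) : Prop :=
  ∃ (m : ℕ) (c : Fin (m + 1) → Fin N), 1 ≤ m ∧ IsWalk A m c (c 0) (c 0) ∧
    walkWeight A m c = (((m : ℝ) * lam : ℝ) : WithTop ℝ) ∧ ∃ t : Fin (m + 1), c t = i

open scoped Classical in
/-- for irreducible `A` (graph containing a circuit) with minimum average
circuit weight `lam`, every finite min-plus eigenvector of `A` is a tropical linear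
combination of the critical columns of the Kleene star of the normalised matrix `Â`. -/
theorem eigenvector_is_tropical_combination_of_critical_columns {N : ℕ}
    (A : Matrix (Fin N) (Fin N) (WithTop ℝ))
    (hirr : ∀ i j : Fin N, ∃ (l : ℕ) (p : Fin (l + 1) → Fin N), IsWalk A l p i j)
    (lam : ℝ)
    (hlb : ∀ (m : ℕ) (i : Fin N) (c : Fin (m + 1) → Fin N), 1 ≤ m → IsWalk A m c i i →
      (((m : ℝ) * lam : ℝ) : WithTop ℝ) ≤ walkWeight A m c)
    (hmin : ∃ (m : ℕ) (i : Fin N) (c : Fin (m + 1) → Fin N), 1 ≤ m ∧ IsWalk A m c i i ∧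
      walkWeight A m c = (((m : ℝ) * lam : ℝ) : WithTop ℝ)) :
    ∀ v : Fin N → ℝ,
      (∀ i : Fin N,
        Finset.univ.inf (fun j => A i j + (v j : WithTop ℝ)) =
          ((lam + v i : ℝ) : WithTop ℝ)) →
      ∃ a : Fin N → ℝ, ∀ k : Fin N,
        (v k : WithTop ℝ) =
          Finset.univ.inf (fun i =>
            if IsCriticalNode A lam i then
              ((a i : ℝ) : WithTop ℝ) + kleeneStar (normalised A lam) k i
            else ⊤) := by
  intro v hv
  refine ⟨v, fun k => ?_⟩
  set B := normalised A lam with hB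
  -- the eigen-inequality
  have hE : ∀ i j : Fin N, ((lam + v i : ℝ) : WithTop ℝ) ≤ A i j + (v j : WithTop ℝ) :=
    fun i j => (hv i) ▸ Finset.inf_le (Finset.mem_univ j)
  have hEB : ∀ i j : Fin N, ((v i : ℝ) : WithTop ℝ) ≤ B i j + (v j : WithTop ℝ) := by
    intro i j
    have h2 := add_le_add_left (hE i j) ((-lam : ℝ) : WithTop ℝ)
    calc ((v i : ℝ) : WithTop ℝ)
        = ((lam + v i : ℝ) : WithTop ℝ) + ((-lam : ℝ) : WithTop ℝ) := by
          rw [← WithTop.coe_add]; norm_num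
      _ ≤ A i j + (v j : WithTop ℝ) + ((-lam : ℝ) : WithTop ℝ) := h2
      _ = B i j + (v j : WithTop ℝ) := by rw [hB]; unfold normalised; abel
  -- tight successor function
  have htight : ∀ i : Fin N, ∃ m : Fin N,
      A i m + (v m : WithTop ℝ) = ((lam + v i : ℝ) : WithTop ℝ) := by
    intro i
    obtain ⟨m, _, hm⟩ := Finset.exists_mem_eq_inf Finset.univ
      ⟨k, Finset.mem_univ k⟩ (fun j => A i j + (v j : WithTop ℝ))
    exact ⟨m, by rw [← hm, hv i]⟩
  choose f hf using htight
  set j : ℕ → Fin N := fun n => f^[n] k with hjdef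
  have hjsucc : ∀ n, j (n + 1) = f (j n) := fun n => Function.iterate_succ_apply' f n k
  have hj0 : j 0 = k := rfl
  have hedge : ∀ n, A (j n) (j (n + 1)) =
      ((lam + v (j n) - v (j (n + 1)) : ℝ) : WithTop ℝ) := by
    intro n
    rw [hjsucc n]
    exact coe_of_add _ _ _ (hf (j n))
  -- pigeonhole
  have hpig : ∃ s t : ℕ, s < t ∧ t ≤ N ∧ j s = j t := by
    obtain ⟨x, y, hne, hxy⟩ := Fintype.exists_ne_map_eq_of_card_lt
      (fun x : Fin (N + 1) => j x.val) (by simp)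
    have hne' : x.val ≠ y.val := fun h => hne (Fin.val_injective h)
    rcases Nat.lt_or_gt_of_ne hne' with h | h
    · exact ⟨x.val, y.val, h, Nat.lt_succ_iff.mp y.isLt, hxy⟩
    · exact ⟨y.val, x.val, h, Nat.lt_succ_iff.mp x.isLt, hxy.symm⟩
  obtain ⟨s, t, hst, htN, hjst⟩ := hpig
  -- the critical node
  have hcrit : IsCriticalNode A lam (j s) := by
    set m := t - s with hm
    set c : Fin (m + 1) → Fin N := fun u => j (t - u.val) with hc
    have hc0 : c 0 = j s := by
      show j (t - 0) = j s
      rw [Nat.sub_zero, ← hjst]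
    have hclast : c (Fin.last m) = j s := by
      show j (t - m) = j s
      congr 1; omega
    have hedge' : ∀ u : Fin m, A (c u.succ) (c u.castSucc) =
        ((lam + v (j (t - 1 - u.val)) - v (j (t - u.val)) : ℝ) : WithTop ℝ) := by
      intro u
      have hu : u.val < m := u.isLt
      have e1 : (t - u.succ.val) = t - 1 - u.val := by
        simp only [Fin.val_succ]; omega
      have e2 : t - 1 - u.val + 1 = t - u.val := by omega
      show A (j (t - u.succ.val)) (j (t - u.castSucc.val)) = _
      rw [e1, Fin.coe_castSucc, ← e2, hedge (t - 1 - u.val), e2]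
    refine ⟨m, c, by omega, ⟨rfl, hclast.trans hc0.symm, ?_⟩, ?_, ⟨Fin.last m, hclast⟩⟩
    · intro u
      rw [hedge' u]
      exact WithTop.coe_ne_top
    · unfold walkWeight
      have : ∀ u ∈ (Finset.univ : Finset (Fin m)), A (c u.succ) (c u.castSucc) =
          (((lam + v (j (t - 1 - u.val)) - v (j (t - u.val)) : ℝ)) : WithTop ℝ) :=
        fun u _ => hedge' u
      rw [Finset.sum_congr rfl this, ← WithTop.coe_sum, WithTop.coe_inj]
      have := tel (fun n => v (j n)) lam m t (by omega)
      rw [this]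
      have e3 : t - m = s := by omega
      rw [e3, hjst]
      ring
  -- the walk from j s to k and its B-weight
  have hpow : mpPow B s k (j s) ≤ ((v k - v (j s) : ℝ) : WithTop ℝ) := by
    set c : Fin (s + 1) → Fin N := fun u => j (s - u.val) with hc
    have hc0 : c 0 = j s := by show j (s - 0) = j s; rw [Nat.sub_zero]
    have hclast : c (Fin.last s) = k := by
      show j (s - s) = k
      rw [Nat.sub_self, hj0]
    have h1 := pow_le_walk B s c
    rw [hclast, hc0] at h1
    refine h1.trans ?_
    have hedge' : ∀ u ∈ (Finset.univ : Finset (Fin s)), B (c u.succ) (c u.castSucc) =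
        ((0 + v (j (s - 1 - u.val)) - v (j (s - u.val)) : ℝ) : WithTop ℝ) := by
      intro u _
      have hu : u.val < s := u.isLt
      have e1 : (s - u.succ.val) = s - 1 - u.val := by
        simp only [Fin.val_succ]; omega
      have e2 : s - 1 - u.val + 1 = s - u.val := by omega
      show A (j (s - u.succ.val)) (j (s - u.castSucc.val)) + ((-lam : ℝ) : WithTop ℝ) = _
      rw [e1, Fin.coe_castSucc, ← e2, hedge (s - 1 - u.val), e2, ← WithTop.coe_add,
        WithTop.coe_inj]
      ring
    rw [Finset.sum_congr rfl hedge', ← WithTop.coe_sum, WithTop.coe_le_coe]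
    have := tel (fun n => v (j n)) 0 s s le_rfl
    rw [this, Nat.sub_self, hj0]
    simp
  -- conclude
  apply le_antisymm
  · apply Finset.le_inf
    intro i _
    by_cases hi : IsCriticalNode A lam i
    · rw [if_pos hi]
      show _ ≤ ((v i : ℝ) : WithTop ℝ) + (Finset.range N).inf fun l => mpPow B l k i
      rw [wt_add_inf]
      refine Finset.le_inf fun l _ => ?_
      calc ((v k : ℝ) : WithTop ℝ) ≤ mpPow B l k i + (v i : WithTop ℝ) := lower B v hEB l k i
        _ = (v i : WithTop ℝ) + mpPow B l k i := add_comm _ _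
    · rw [if_neg hi]; exact le_top
  · have hsN : s ∈ Finset.range N := Finset.mem_range.mpr (by omega)
    calc Finset.univ.inf (fun i =>
          if IsCriticalNode A lam i then ((v i : ℝ) : WithTop ℝ) + kleeneStar B k i else ⊤)
        ≤ if IsCriticalNode A lam (j s) then
            ((v (j s) : ℝ) : WithTop ℝ) + kleeneStar B k (j s) else ⊤ :=
          Finset.inf_le (Finset.mem_univ _)
      _ = ((v (j s) : ℝ) : WithTop ℝ) + kleeneStar B k (j s) := if_pos hcrit
      _ ≤ ((v (j s) : ℝ) : WithTop ℝ) + mpPow B s k (j s) :=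
          add_le_add_right (Finset.inf_le hsN) _
      _ ≤ ((v (j s) : ℝ) : WithTop ℝ) + ((v k - v (j s) : ℝ) : WithTop ℝ) :=
          add_le_add_right hpow _
      _ = ((v k : ℝ) : WithTop ℝ) := by rw [← WithTop.coe_add]; norm_num
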